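/- Let R ≤ M_n(ℂ) be a subspace with R† = R, and assume that n is odd. If dim(R) ≥ 2, then R contains a nonzero Hermitian matrix a with det(a) = 0. -/
import Mathlib


namespace QG

open Matrix

abbrev Mat (n : ℕ) := Matrix (Fin n) (Fin n) ℂ


noncomputable def herm {n : ℕ} (R : Submodule ℂ (Mat n)) : Submodule ℝ (Mat n) where
  carrier := {m | m ∈ R ∧ mᴴ = m}
  add_mem' := by
    rintro a b ⟨ha, ha'⟩ ⟨hb, hb'⟩
    exact ⟨R.add_mem ha hb, by simp [conjTranspose_add, ha', hb']⟩
  zero_mem' := ⟨R.zero_mem, by simp⟩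
  smul_mem' := by
    rintro r a ⟨ha, ha'⟩
    refine ⟨R.smul_of_tower_mem r ha, ?_⟩
    rw [conjTranspose_smul, ha']; simp

noncomputable def hermMap {n : ℕ} (R : Submodule ℂ (Mat n)) (hstar : ∀ a ∈ R, aᴴ ∈ R) :
    ↥R →ₗ[ℝ] ↥(herm R) × ↥(herm R) where
  toFun x := (⟨(x : Mat n) + (x : Mat n)ᴴ,
      ⟨R.add_mem x.2 (hstar _ x.2), by simp [conjTranspose_add, add_comm]⟩⟩,
    ⟨(-Complex.I) • ((x : Mat n) - (x : Mat n)ᴴ),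
      ⟨R.smul_mem _ (R.sub_mem x.2 (hstar _ x.2)), by
        rw [conjTranspose_smul]
        simp [conjTranspose_sub, smul_sub, Complex.conj_I]
        abel⟩⟩)
  map_add' x y := by
    ext <;> simp <;> ring
  map_smul' r x := by
    ext <;> simp <;> ring

theorem hermMap_inj {n : ℕ} (R : Submodule ℂ (Mat n)) (hstar : ∀ a ∈ R, aᴴ ∈ R) :
    Function.Injective (hermMap R hstar) := by
  rw [← LinearMap.ker_eq_bot, LinearMap.ker_eq_bot']
  intro x hx
  have h1 : (x : Mat n) + (x : Mat n)ᴴ = 0 := congrArg Subtype.val (congrArg Prod.fst hx)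
  have h2 : (-Complex.I) • ((x : Mat n) - (x : Mat n)ᴴ) = 0 :=
    congrArg Subtype.val (congrArg Prod.snd hx)
  have h3 : (x : Mat n) - (x : Mat n)ᴴ = 0 := by
    have := smul_eq_zero.mp h2
    simpa [Complex.I_ne_zero] using this
  have : (2 : ℂ) • (x : Mat n) = 0 := by
    have := congrArg₂ (· + ·) h1 h3
    simpa [two_smul, add_add_sub_cancel] using this
  ext1
  simpa using smul_eq_zero.mp this

theorem two_le_finrank_herm {n : ℕ} (R : Submodule ℂ (Mat n)) (hstar : ∀ a ∈ R, aᴴ ∈ R)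
    (hdim : 2 ≤ Module.finrank ℂ ↥R) : 2 ≤ Module.finrank ℝ ↥(herm R) := by
  have h1 : Module.finrank ℝ ↥R ≤ Module.finrank ℝ (↥(herm R) × ↥(herm R)) :=
    LinearMap.finrank_le_finrank_of_injective (hermMap_inj R hstar)
  rw [Module.finrank_prod] at h1
  have h2 : Module.finrank ℝ ℂ * Module.finrank ℂ ↥R = Module.finrank ℝ ↥R :=
    Module.finrank_mul_finrank ℝ ℂ ↥R
  rw [Complex.finrank_real_complex] at h2
  omega

/-- a †-closed subspace of `M_n(ℂ)` with `n` odd and dimension at least `2`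
contains a nonzero singular Hermitian matrix. -/
theorem stmt7 {n : ℕ} (R : Submodule ℂ (Mat n)) (hstar : ∀ a ∈ R, aᴴ ∈ R)
    (hodd : Odd n) (hdim : 2 ≤ Module.finrank ℂ ↥R) :
    ∃ a ∈ R, a ≠ 0 ∧ a.IsHermitian ∧ a.det = 0 := by
  have hS2 := two_le_finrank_herm R hstar hdim
  have hSbot : herm R ≠ ⊥ := by
    intro h; rw [h] at hS2; simp at hS2
  obtain ⟨a, haS, ha0⟩ := (herm R).ne_bot_iff.mp hSbot
  have hnle : ¬ (herm R ≤ Submodule.span ℝ {a}) := by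
    intro h
    have := Submodule.finrank_mono h
    rw [finrank_span_singleton ha0] at this
    omega
  obtain ⟨b, hbS, hb⟩ : ∃ b ∈ herm R, b ∉ Submodule.span ℝ {a} := by
    by_contra h
    push_neg at h
    exact hnle fun x hx => h x hx
  have hindep : ∀ s t : ℝ, s • a + t • b = 0 → s = 0 ∧ t = 0 := by
    intro s t h
    rcases eq_or_ne t 0 with ht | ht
    · subst ht
      simp only [zero_smul, add_zero] at h
      rcases smul_eq_zero.mp h with hs | h'
      · exact ⟨hs, rfl⟩
      · exact absurd h' ha0
    · exfalso
      apply hb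
      have htb : t • b = -(s • a) := by
        rw [eq_neg_iff_add_eq_zero, add_comm]; exact h
      have hbeq : b = (-(t⁻¹*s)) • a := by
        calc b = t⁻¹ • (t • b) := by rw [smul_smul, inv_mul_cancel₀ ht, one_smul]
          _ = t⁻¹ • (-(s • a)) := by rw [htb]
          _ = (-(t⁻¹*s)) • a := by rw [smul_neg, smul_smul, neg_smul]
      rw [hbeq]
      exact Submodule.smul_mem _ _ (Submodule.mem_span_singleton_self a)
  set c : ℝ → Mat n := fun t => Real.cos t • a + Real.sin t • b with hc
  have hcmem : ∀ t, c t ∈ R :=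
    fun t => R.add_mem (R.smul_of_tower_mem _ haS.1) (R.smul_of_tower_mem _ hbS.1)
  have hcherm : ∀ t, (c t).IsHermitian := by
    intro t
    show (c t)ᴴ = c t
    simp [hc, conjTranspose_add, conjTranspose_smul, haS.2, hbS.2]
  have him : ∀ t, ((c t).det).im = 0 := by
    intro t
    have h1 : ((c t)ᴴ).det = star (c t).det := det_conjTranspose (c t)
    rw [hcherm t] at h1
    have := Complex.conj_eq_iff_im.mp h1.symm
    exact this
  have hcont : Continuous fun t => ((c t).det).re := by
    apply Complex.continuous_re.comp
    apply Continuous.matrix_det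
    exact (Real.continuous_cos.smul continuous_const).add
      (Real.continuous_sin.smul continuous_const)
  have hf0 : ((c 0).det).re = a.det.re := by simp [hc]
  have hfpi : ((c Real.pi).det).re = -(a.det.re) := by
    have : c Real.pi = -a := by simp [hc]
    rw [this, det_neg, Fintype.card_fin, hodd.neg_one_pow]
    simp
  obtain ⟨t, _, hft⟩ : ∃ t ∈ Set.uIcc 0 Real.pi, ((c t).det).re = 0 := by
    have hmem : (0:ℝ) ∈ Set.uIcc (((c 0).det).re) (((c Real.pi).det).re) := by
      rw [hf0, hfpi, Set.mem_uIcc]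
      rcases le_total (a.det.re) 0 with h | h
      · exact Or.inl ⟨h, neg_nonneg.mpr h⟩
      · exact Or.inr ⟨neg_nonpos.mpr h, h⟩
    obtain ⟨t, ht, hft⟩ := intermediate_value_uIcc hcont.continuousOn hmem
    exact ⟨t, ht, hft⟩
  refine ⟨c t, hcmem t, ?_, hcherm t, ?_⟩
  · intro h
    obtain ⟨h1, h2⟩ := hindep _ _ h
    have := Real.sin_sq_add_cos_sq t
    rw [h1, h2] at this
    norm_num at this
  · exact Complex.ext hft (him t)


end QG
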